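/- (Lemma 3.1) Consider a stepup procedure with constants α₁ ≤ ⋯ ≤ α_s applied to p-values p̂₁,…,p̂_s, where the set I of true hypotheses has size |I| ≥ k, and q̂₍₁₎ ≤ ⋯ ≤ q̂₍|I|₎ are the ordered p-values of true hypotheses. Then the event that the procedure rejects at least k true hypotheses is contained in the event ⋃_{j=k}^{|I|} {q̂₍ⱼ₎ ≤ α_{s-|I|+j}}. In particular, the k-FWER is at most P(⋃_{j=k}^{|I|} {q̂₍ⱼ₎ ≤ α_{s-|I|+j}}). -/

import Mathlib

open MeasureTheory Finset
open scoped Classical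

/-- `orderStat p k` is the `k`-th smallest value (1-indexed) among `p 0, …, p (n-1)`. -/
noncomputable def orderStat {n : ℕ} (p : Fin n → ℝ) (k : ℕ) : ℝ :=
  if h : k - 1 < n then p (Tuple.sort p ⟨k - 1, h⟩) else 0

/-- The number of rejections of the stepup procedure with critical values
`c 1 ≤ … ≤ c n` (1-indexed): the largest `j` with `p_(j) ≤ c j` (0 if none). -/
noncomputable def numReject {n : ℕ} (c : ℕ → ℝ) (p : Fin n → ℝ) : ℕ :=
  ((Finset.Icc 1 n).filter (fun j => orderStat p j ≤ c j)).sup id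

/-- The indices rejected by the stepup procedure: those carrying the
`numReject c p` smallest p-values (via the sorting permutation). -/
noncomputable def rejectedSet {n : ℕ} (c : ℕ → ℝ) (p : Fin n → ℝ) : Finset (Fin n) :=
  (Finset.univ.filter (fun j : Fin n => (j : ℕ) + 1 ≤ numReject c p)).image (Tuple.sort p)

/-- The `k`-th smallest (1-indexed) of the p-values with indices in `I`. -/
noncomputable def trueOrderStat {n : ℕ} (I : Finset (Fin n)) (p : Fin n → ℝ) (k : ℕ) : ℝ :=
  orderStat (fun j : Fin I.card => p (I.orderIsoOfFin rfl j).1) k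

lemma orderStat_le_of_card {n : ℕ} (f : Fin n → ℝ) {t : ℝ} {j : ℕ} (hj : 1 ≤ j)
    (h : j ≤ (Finset.univ.filter (fun i => f i ≤ t)).card) :
    orderStat f j ≤ t := by
  have hjn : j - 1 < n := by
    have h2 : (Finset.univ.filter (fun i => f i ≤ t)).card ≤ n := by
      simpa using Finset.card_filter_le Finset.univ (fun i => f i ≤ t)
    omega
  rw [orderStat, dif_pos hjn]
  have hmono := Tuple.monotone_sort f
  have hcard : Fintype.card {i // (f ∘ Tuple.sort f) i ≤ t} = Fintype.card {i // f i ≤ t} :=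
    Fintype.card_congr ((Tuple.sort f).subtypeEquiv (fun a => Iff.rfl))
  have := (Tuple.lt_card_le_iff_apply_le_of_monotone (f := f ∘ Tuple.sort f) (a := t) (j := ⟨j-1, hjn⟩) hmono).mp ?_
  · exact this
  · rw [← Fintype.card_subtype, hcard, Fintype.card_subtype]
    show j - 1 < _
    omega


/-- Lemma 3.1: the event that the stepup procedure rejects at least `k` true
hypotheses is contained in `⋃_{j=k}^{|I|} {q_(j) ≤ α_{s-|I|+j}}`; in particular
the k-FWER is bounded by the probability of the latter event. -/
theorem stmt6 {Ω : Type*} [MeasurableSpace Ω] (μ : Measure Ω) [IsProbabilityMeasure μ]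
    {s : ℕ} (p : Fin s → Ω → ℝ) (I : Finset (Fin s)) (k : ℕ)
    (hk1 : 1 ≤ k) (hkI : k ≤ I.card)
    (c : ℕ → ℝ) (hc : ∀ i j, 1 ≤ i → i ≤ j → j ≤ s → c i ≤ c j) :
    {ω | k ≤ (rejectedSet c (fun i => p i ω) ∩ I).card} ⊆
      {ω | ∃ j, k ≤ j ∧ j ≤ I.card ∧
        trueOrderStat I (fun i => p i ω) j ≤ c (s - I.card + j)} ∧
    μ {ω | k ≤ (rejectedSet c (fun i => p i ω) ∩ I).card} ≤
      μ {ω | ∃ j, k ≤ j ∧ j ≤ I.card ∧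
        trueOrderStat I (fun i => p i ω) j ≤ c (s - I.card + j)} := by
  have hsub : {ω | k ≤ (rejectedSet c (fun i => p i ω) ∩ I).card} ⊆
      {ω | ∃ j, k ≤ j ∧ j ≤ I.card ∧
        trueOrderStat I (fun i => p i ω) j ≤ c (s - I.card + j)} := by
    intro ω hω
    simp only [Set.mem_setOf_eq] at hω ⊢
    set q : Fin s → ℝ := fun i => p i ω with hq
    set r := numReject c q with hrdef
    set R := rejectedSet c q with hRdef
    set j := (R ∩ I).card with hjdef
    have hIs : I.card ≤ s := by simpa using Finset.card_le_card (Finset.subset_univ I)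
    have hjI : j ≤ I.card := Finset.card_le_card Finset.inter_subset_right
    have hj1 : 1 ≤ j := le_trans hk1 hω
    -- R nonempty → r ≥ 1
    have hRne : (R ∩ I).Nonempty := Finset.card_pos.mp (by omega)
    have hr1 : 1 ≤ r := by
      obtain ⟨x, hx⟩ := hRne
      have hxR : x ∈ R := (Finset.mem_inter.mp hx).1
      rw [hRdef, rejectedSet, Finset.mem_image] at hxR
      obtain ⟨a, ha, -⟩ := hxR
      rw [Finset.mem_filter] at ha
      omega
    have hrs : r ≤ s := by
      apply Finset.sup_le
      intro b hb
      simp only [Finset.mem_filter, Finset.mem_Icc] at hb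
      exact hb.1.2
    -- r attains: orderStat q r ≤ c r
    have hrmem : orderStat q r ≤ c r := by
      set S := (Finset.Icc 1 s).filter (fun i => orderStat q i ≤ c i) with hS
      have hSne : S.Nonempty := by
        rw [Finset.nonempty_iff_ne_empty]
        intro hemp
        have : r = 0 := by rw [hrdef, numReject, ← hS, hemp]; simp
        omega
      have hmax : S.max' hSne ∈ S := S.max'_mem hSne
      have heq : S.max' hSne = r := by
        rw [hrdef, numReject, ← hS, Finset.max'_eq_sup' , Finset.sup'_eq_sup hSne id]
      rw [heq] at hmax
      exact (Finset.mem_filter.mp hmax).2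
    have hr1s : r - 1 < s := by omega
    -- every i ∈ R has q i ≤ orderStat q r
    have hRle : ∀ i ∈ R, q i ≤ orderStat q r := by
      intro i hi
      rw [hRdef, rejectedSet, Finset.mem_image] at hi
      obtain ⟨a, ha, rfl⟩ := hi
      rw [Finset.mem_filter] at ha
      rw [orderStat, dif_pos hr1s]
      exact Tuple.monotone_sort q (show a ≤ ⟨r - 1, hr1s⟩ by
        rw [Fin.le_def]; simp; omega)
    -- card R = r
    have hcardR : R.card = r := by
      rw [hRdef, rejectedSet, Finset.card_image_of_injective _ (Tuple.sort q).injective]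
      have : (Finset.univ.filter (fun a : Fin s => (a : ℕ) + 1 ≤ r)).card
          = Fintype.card {a : Fin s // a < r} := by
        rw [Fintype.card_subtype]
        apply Finset.card_bij (fun a _ => a)
        · intro a ha
          simp only [Finset.mem_filter, Finset.mem_univ, true_and] at ha ⊢
          omega
        · intro a b _ _ h
          exact h
        · intro b hb
          refine ⟨b, ?_, rfl⟩
          simp only [Finset.mem_filter, Finset.mem_univ, true_and] at hb ⊢
          omega
      rw [this, Fintype.card_fin_lt_of_le hrs]
    -- r ≤ s - I.card + j
    have hsdiff : (R \ I).card ≤ s - I.card := by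
      have h1 : R \ I ⊆ Finset.univ \ I := Finset.sdiff_subset_sdiff (Finset.subset_univ R) le_rfl
      have h2 := Finset.card_le_card h1
      rw [Finset.card_sdiff_of_subset (Finset.subset_univ I)] at h2
      simpa using h2
    have hsplit : j + (R \ I).card = r := by
      rw [hjdef, ← hcardR]
      exact Finset.card_inter_add_card_sdiff R I
    have hrle : r ≤ s - I.card + j := by omega
    refine ⟨j, hω, hjI, ?_⟩
    have key : trueOrderStat I q j ≤ orderStat q r := by
      rw [trueOrderStat]
      apply orderStat_le_of_card _ hj1
      set e := I.orderIsoOfFin rfl with he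
      have hIpos : 0 < I.card := by omega
      set f : Fin s → Fin I.card := fun i =>
        if h : i ∈ I then e.symm ⟨i, h⟩ else ⟨0, hIpos⟩ with hf
      have hmaps : ∀ i ∈ R ∩ I, f i ∈ Finset.univ.filter
          (fun a : Fin I.card => q (e a).1 ≤ orderStat q r) := by
        intro i hi
        rw [Finset.mem_inter] at hi
        rw [Finset.mem_filter]
        refine ⟨Finset.mem_univ _, ?_⟩
        rw [hf]
        simp only [hi.2, dif_pos]
        rw [OrderIso.apply_symm_apply]
        exact hRle i hi.1
      have hinj : Set.InjOn f (R ∩ I : Finset (Fin s)) := by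
        intro a ha b hb hab
        rw [Finset.mem_coe, Finset.mem_inter] at ha hb
        rw [hf] at hab
        simp only [ha.2, hb.2, dif_pos] at hab
        have := congrArg (fun x => ((e x : I) : Fin s)) hab
        simpa [OrderIso.apply_symm_apply] using this
      exact Finset.card_le_card_of_injOn f hmaps hinj
    calc trueOrderStat I q j ≤ orderStat q r := key
      _ ≤ c r := hrmem
      _ ≤ c (s - I.card + j) := hc r (s - I.card + j) hr1 hrle (by omega)
  exact ⟨hsub, measure_mono hsub⟩
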